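/- Fix N ∈ ℕ, bounds x_{i,min} < 0 < x_{i,max} and s_{i,min} < s_{i,max} for i = 1,…,N, g_max > 0, r ∈ [0,1], α ∈ [0,1], l_{f,max} > 0, and constants p_{s,min}, p_{b,max}, D'_{i,min}, D'_{i,max} with p_{b,max} − p_{s,min} + D'_{i,max} − D'_{i,min} > 0 and s_{i,max} − s_{i,min} + x_{i,min} − x_{i,max} > 0 for all i. Let 0 < V ≤ V_max where V_max = min_{1≤i≤N} (s_{i,max} − s_{i,min} + x_{i,min} − x_{i,max})/(p_{b,max} − p_{s,min} + D'_{i,max} − D'_{i,min}), and set β_i = V·(p_{b,max} + D'_{i,max}) − x_{i,min} + s_{i,min}. For each slot t let the data satisfy a_i(t) ≥ 0, l_b(t) ≥ 0, 0 < l_f(t) ≤ l_{f,max}, and 0 ≤ p_{s,min} ≤ p_s(t) < p_b(t) ≤ p_{b,max}; let each D_i be differentiable with D'_{i,min} ≤ D_i'(x) ≤ D'_{i,max} on [x_{i,min}, x_{i,max}], and let C : ℝ → ℝ. Initialize J(0) = 0, s_i(0) ∈ [s_{i,min}, s_{i,max}], g(−1) ∈ [0, g_max], and suppose for every t the vector u(t)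 = (x_1(t),…,x_N(t), l_m(t), g(t), e_b(t), e_s(t)) is a minimizer of the P3 objective f_t(u) = Σ_i [V·D_i(x_i) + (s_i(t) − β_i)·x_i] + V·C(g) + V·p_b(t)·e_b − V·p_s(t)·e_s − (J(t)/l_f(t))·l_m over the P3-feasible set with parameters (a_i(t), l_b(t), l_f(t), g_prev = g(t−1), s_i(t), J(t)), and that the states update as s_i(t+1) = s_i(t) + x_i(t) and J(t+1) = max(J(t) − α, 0) + (l_b(t) + l_f(t) − l_m(t))/l_f(t). Then for all i and all t, s_{i,min} ≤ s_i(t) ≤ s_{i,max}, and limsup_{T→∞} (1/T)·Σ_{t=0}^{T−1} (l_b(t) + l_f(t) − l_m(t))/l_f(t) ≤ α; that is, the control actions produced by Algorithm 1 are feasible for the original problem P1. -/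

import Mathlib

/-- A control action `u = (x₁,…,x_N, l_m, g, e_b, e_s)` in the per-slot problem P3. -/
structure Ctrl (N : ℕ) where
  x : Fin N → ℝ
  lm : ℝ
  g : ℝ
  eb : ℝ
  es : ℝ

/-- P3-feasibility of a control action. -/
def P3Feasible {N : ℕ} (a xmin xmax : Fin N → ℝ) (lb lf gmax gprev r : ℝ)
    (u : Ctrl N) : Prop :=
  lb ≤ u.lm ∧ u.lm ≤ lb + lf ∧
  (∀ i, xmin i ≤ u.x i ∧ u.x i ≤ xmax i ∧ u.x i ≤ a i) ∧
  0 ≤ u.g ∧ u.g ≤ gmax ∧ |u.g - gprev| ≤ r * gmax ∧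
  0 ≤ u.eb ∧ 0 ≤ u.es ∧
  u.g + u.eb + ∑ i, (a i - u.x i) = u.es + u.lm

/-- The P3 objective
`f(u) = Σᵢ [V·Dᵢ(xᵢ) + (sᵢ − βᵢ)·xᵢ] + V·C(g) + V·p_b·e_b − V·p_s·e_s − (J/l_f)·l_m`. -/
noncomputable def P3Obj {N : ℕ} (s β : Fin N → ℝ) (D : Fin N → ℝ → ℝ) (C : ℝ → ℝ)
    (V pb ps J lf : ℝ) (u : Ctrl N) : ℝ :=
  (∑ i, (V * D i (u.x i) + (s i - β i) * u.x i)) + V * C u.g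
    + V * pb * u.eb - V * ps * u.es - (J / lf) * u.lm

/-- Mean value inequality helper: a two-sided derivative bound gives a slope
representation on any subinterval. -/
lemma stmt18_slope (D : ℝ → ℝ) (xmn xmx Dmn Dmx : ℝ)
    (hdiff : ∀ x ∈ Set.Icc xmn xmx, DifferentiableAt ℝ D x)
    (hD' : ∀ x ∈ Set.Icc xmn xmx, Dmn ≤ deriv D x ∧ deriv D x ≤ Dmx)
    (p q : ℝ) (hpq : p < q) (hp : xmn ≤ p) (hq : q ≤ xmx) :
    ∃ c, (Dmn ≤ c ∧ c ≤ Dmx) ∧ D q - D p = c * (q - p) := by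
  have hsub : Set.Icc p q ⊆ Set.Icc xmn xmx := Set.Icc_subset_Icc hp hq
  have hcont : ContinuousOn D (Set.Icc p q) := fun x hx =>
    (hdiff x (hsub hx)).continuousAt.continuousWithinAt
  have hdo : DifferentiableOn ℝ D (Set.Ioo p q) := fun x hx =>
    (hdiff x (hsub (Set.Ioo_subset_Icc_self hx))).differentiableWithinAt
  obtain ⟨c, hc, hceq⟩ := exists_deriv_eq_slope D hpq hcont hdo
  have hne : q - p ≠ 0 := sub_ne_zero.2 hpq.ne'
  refine ⟨deriv D c, hD' c (hsub (Set.Ioo_subset_Icc_self hc)), ?_⟩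
  rw [hceq]
  field_simp

set_option maxHeartbeats 1600000 in
/-- pathwise Proposition 1: with perturbation parameters `βᵢ` as in (13)
and `V ∈ (0, V_max]`, the real-time algorithm (per-slot minimization of P3 together
with the storage and virtual-queue updates) keeps every storage energy state within its
capacity limits, and the long-term time-averaged portion of unsatisfied flexible loads
is at most `α`; i.e., the control actions produced by Algorithm 1 are feasible for the
original problem P1. -/
theorem stmt18 (N : ℕ)
    (xmin xmax smin smax : Fin N → ℝ)
    (gmax r α lfmax psmin pbmax V : ℝ)
    (Dmin Dmax : Fin N → ℝ) (β : Fin N → ℝ)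
    (hxmin : ∀ i, xmin i < 0) (hxmax : ∀ i, 0 < xmax i)
    (hsbounds : ∀ i, smin i < smax i)
    (hgmax : 0 < gmax) (hr : r ∈ Set.Icc (0 : ℝ) 1) (hα : α ∈ Set.Icc (0 : ℝ) 1)
    (hlfmax : 0 < lfmax)
    (hden : ∀ i, 0 < pbmax - psmin + Dmax i - Dmin i)
    (hnum : ∀ i, 0 < smax i - smin i + xmin i - xmax i)
    (hV0 : 0 < V)
    (hVmax : ∀ i, V ≤ (smax i - smin i + xmin i - xmax i)
        / (pbmax - psmin + Dmax i - Dmin i))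
    (hβ : ∀ i, β i = V * (pbmax + Dmax i) - xmin i + smin i)
    (a : ℕ → Fin N → ℝ) (lb lf pb ps : ℕ → ℝ)
    (D : Fin N → ℝ → ℝ) (C : ℝ → ℝ)
    (ha : ∀ t i, 0 ≤ a t i) (hlb : ∀ t, 0 ≤ lb t)
    (hlf : ∀ t, 0 < lf t ∧ lf t ≤ lfmax)
    (hpsmin : 0 ≤ psmin) (hps : ∀ t, psmin ≤ ps t)
    (hpbs : ∀ t, ps t < pb t) (hpb : ∀ t, pb t ≤ pbmax)
    (hDdiff : ∀ i, ∀ x ∈ Set.Icc (xmin i) (xmax i), DifferentiableAt ℝ (D i) x)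
    (hD' : ∀ i, ∀ x ∈ Set.Icc (xmin i) (xmax i),
        Dmin i ≤ deriv (D i) x ∧ deriv (D i) x ≤ Dmax i)
    (s : ℕ → Fin N → ℝ) (J : ℕ → ℝ) (u : ℕ → Ctrl N) (gprev : ℕ → ℝ)
    (hJ0 : J 0 = 0)
    (hs0 : ∀ i, s 0 i ∈ Set.Icc (smin i) (smax i))
    (hg0 : gprev 0 ∈ Set.Icc 0 gmax)
    (hgrec : ∀ t, gprev (t + 1) = (u t).g)
    (hfeas : ∀ t, P3Feasible (a t) xmin xmax (lb t) (lf t) gmax (gprev t) r (u t))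
    (hmin : ∀ t, ∀ v : Ctrl N,
        P3Feasible (a t) xmin xmax (lb t) (lf t) gmax (gprev t) r v →
        P3Obj (s t) β D C V (pb t) (ps t) (J t) (lf t) (u t)
          ≤ P3Obj (s t) β D C V (pb t) (ps t) (J t) (lf t) v)
    (hsrec : ∀ t i, s (t + 1) i = s t i + (u t).x i)
    (hJrec : ∀ t, J (t + 1) = max (J t - α) 0 + (lb t + lf t - (u t).lm) / lf t) :
    (∀ i t, smin i ≤ s t i ∧ s t i ≤ smax i) ∧
    Filter.limsup (fun T : ℕ => (1 / (T : ℝ)) * ∑ t ∈ Finset.range T,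
        (lb t + lf t - (u t).lm) / lf t) Filter.atTop ≤ α := by
  have hlm1 : ∀ t, lb t ≤ (u t).lm := fun t => (hfeas t).1
  have hlm2 : ∀ t, (u t).lm ≤ lb t + lf t := fun t => (hfeas t).2.1
  have hxb : ∀ t i, xmin i ≤ (u t).x i ∧ (u t).x i ≤ xmax i ∧ (u t).x i ≤ a t i :=
    fun t => (hfeas t).2.2.1
  have hpb0 : 0 ≤ pbmax := le_trans hpsmin (le_trans (hps 0)
    (le_trans (hpbs 0).le (hpb 0)))
  -- the objective-difference computation for the storage swap arguments
  have hswap : ∀ (t : ℕ) (i : Fin N) (eb' es' : ℝ),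
      let v : Ctrl N := ⟨Function.update (u t).x i 0, (u t).lm, (u t).g, eb', es'⟩
      P3Obj (s t) β D C V (pb t) (ps t) (J t) (lf t) v
        = P3Obj (s t) β D C V (pb t) (ps t) (J t) (lf t) (u t)
          + (V * D i 0 - (V * D i ((u t).x i) + (s t i - β i) * (u t).x i))
          + V * pb t * (eb' - (u t).eb) - V * ps t * (es' - (u t).es) := by
    intro t i eb' es'
    have key : ∀ j : Fin N,
        (V * D j (Function.update (u t).x i 0 j) + (s t j - β j) * Function.update (u t).x i 0 j)
        = (V * D j ((u t).x j) + (s t j - β j) * (u t).x j)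
          + (if j = i then V * D i 0 - (V * D i ((u t).x i) + (s t i - β i) * (u t).x i) else 0) := by
      intro j
      by_cases hj : j = i
      · subst hj; rw [Function.update_self, if_pos rfl]; ring
      · rw [Function.update_of_ne hj, if_neg hj]; ring
    simp only [P3Obj]
    rw [Finset.sum_congr rfl (fun j _ => key j), Finset.sum_add_distrib,
      Finset.sum_ite_eq' Finset.univ i]
    simp only [Finset.mem_univ, if_true]
    ring
  -- the balance-sum identity for the storage swaps
  have hbal : ∀ (t : ℕ) (i : Fin N),
      ∑ j, (a t j - Function.update (u t).x i 0 j)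
        = (∑ j, (a t j - (u t).x j)) + (u t).x i := by
    intro t i
    rw [Finset.sum_sub_distrib, Finset.sum_sub_distrib,
      Finset.sum_update_of_mem (Finset.mem_univ i),
      Finset.sum_eq_sum_sdiff_singleton_add (Finset.mem_univ i) ((u t).x)]
    ring
  -- Claim A : if the storage level is high, the algorithm does not charge
  have claimA : ∀ t i, β i - V * (psmin + Dmin i) < s t i → (u t).x i ≤ 0 := by
    intro t i hst
    by_contra hx
    push_neg at hx
    obtain ⟨h1, h2, h3, h4, h5, h6, h7, h8, h9⟩ := hfeas t
    set xi := (u t).x i with hxi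
    have hvfeas : P3Feasible (a t) xmin xmax (lb t) (lf t) gmax (gprev t) r
        ⟨Function.update (u t).x i 0, (u t).lm, (u t).g, (u t).eb, (u t).es + xi⟩ := by
      refine ⟨h1, h2, ?_, h4, h5, h6, h7, by simp; linarith [h8], ?_⟩
      · intro j
        by_cases hj : j = i
        · subst hj
          simp [Function.update_self]
          exact ⟨(hxmin j).le, (hxmax j).le, ha t j⟩
        · simp [Function.update_of_ne hj]; exact h3 j
      · simp only
        rw [hbal t i, ← hxi]
        linarith [h9]
    have hobj := hmin t _ hvfeas
    rw [hswap t i ((u t).eb) ((u t).es + xi)] at hobj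
    obtain ⟨c, hc, hcs⟩ := stmt18_slope (D i) (xmin i) (xmax i) (Dmin i) (Dmax i)
      (hDdiff i) (hD' i) 0 xi hx (hxmin i).le (hxb t i).2.1
    have hE : V * c + (s t i - β i) + V * ps t ≤ 0 := by nlinarith [hobj, hcs]
    have h1' : V * Dmin i ≤ V * c := mul_le_mul_of_nonneg_left hc.1 hV0.le
    have h2' : V * psmin ≤ V * ps t := mul_le_mul_of_nonneg_left (hps t) hV0.le
    linarith [hst, hE, h1', h2']
  -- Claim B : if the storage level is low, the algorithm does not discharge
  have claimB : ∀ t i, s t i < smin i - xmin i → 0 ≤ (u t).x i := by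
    intro t i hst
    by_contra hx
    push_neg at hx
    obtain ⟨h1, h2, h3, h4, h5, h6, h7, h8, h9⟩ := hfeas t
    set xi := (u t).x i with hxi
    have hvfeas : P3Feasible (a t) xmin xmax (lb t) (lf t) gmax (gprev t) r
        ⟨Function.update (u t).x i 0, (u t).lm, (u t).g, (u t).eb - xi, (u t).es⟩ := by
      refine ⟨h1, h2, ?_, h4, h5, h6, by simp; linarith [h7], h8, ?_⟩
      · intro j
        by_cases hj : j = i
        · subst hj
          simp [Function.update_self]
          exact ⟨(hxmin j).le, (hxmax j).le, ha t j⟩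
        · simp [Function.update_of_ne hj]; exact h3 j
      · simp only
        rw [hbal t i, ← hxi]
        linarith [h9]
    have hobj := hmin t _ hvfeas
    rw [hswap t i ((u t).eb - xi) ((u t).es)] at hobj
    obtain ⟨c, hc, hcs⟩ := stmt18_slope (D i) (xmin i) (xmax i) (Dmin i) (Dmax i)
      (hDdiff i) (hD' i) xi 0 hx (hxb t i).1 (hxmax i).le
    have hE : 0 ≤ V * c + (s t i - β i) + V * pb t := by nlinarith [hobj, hcs]
    have h1' : V * c ≤ V * Dmax i := mul_le_mul_of_nonneg_left hc.2 hV0.le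
    have h2' : V * pb t ≤ V * pbmax := mul_le_mul_of_nonneg_left (hpb t) hV0.le
    linarith [hst, hE, h1', h2', hβ i]
  -- Claim C : if the virtual queue is large, all loads are satisfied
  have claimC : ∀ t, V * pbmax * lfmax < J t → (u t).lm = lb t + lf t := by
    intro t hJt
    by_contra hlm
    have hlm' : (u t).lm < lb t + lf t := lt_of_le_of_ne (hlm2 t) hlm
    obtain ⟨h1, h2, h3, h4, h5, h6, h7, h8, h9⟩ := hfeas t
    set δ := lb t + lf t - (u t).lm with hδ
    have hδ0 : 0 < δ := by simp only [hδ]; linarith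
    have hvfeas : P3Feasible (a t) xmin xmax (lb t) (lf t) gmax (gprev t) r
        ⟨(u t).x, lb t + lf t, (u t).g, (u t).eb + δ, (u t).es⟩ := by
      refine ⟨by simp; linarith [(hlf t).1], le_refl _, h3, h4, h5, h6,
        by simp; linarith, h8, ?_⟩
      simp only
      linarith [h9]
    have hobj := hmin t _ hvfeas
    simp only [P3Obj] at hobj
    have hkey : 0 ≤ V * pb t * δ - (J t / lf t) * δ := by nlinarith [hobj]
    have hJle : J t / lf t ≤ V * pb t := by nlinarith [hkey, hδ0]
    rw [div_le_iff₀ (hlf t).1] at hJle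
    have h1' : V * pb t ≤ V * pbmax := mul_le_mul_of_nonneg_left (hpb t) hV0.le
    have hVpb : 0 ≤ V * pbmax := mul_nonneg hV0.le hpb0
    nlinarith [hJt, hJle, (hlf t).1, (hlf t).2]
  -- storage bounds by induction
  have hsb : ∀ t i, smin i ≤ s t i ∧ s t i ≤ smax i := by
    intro t
    induction t with
    | zero => intro i; exact ⟨(hs0 i).1, (hs0 i).2⟩
    | succ t ih =>
      intro i
      have hxi := hxb t i
      constructor
      · by_cases hc : s t i < smin i - xmin i
        · have := claimB t i hc
          rw [hsrec t i]; linarith [(ih i).1]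
        · push_neg at hc; rw [hsrec t i]; linarith [hxi.1]
      · by_cases hc : β i - V * (psmin + Dmin i) < s t i
        · have := claimA t i hc; rw [hsrec t i]; linarith [(ih i).2]
        · push_neg at hc; rw [hsrec t i]
          have hVd : V * (pbmax - psmin + Dmax i - Dmin i)
              ≤ smax i - smin i + xmin i - xmax i := by
            have h := hVmax i
            rw [le_div_iff₀ (hden i)] at h
            linarith
          rw [hβ i] at hc
          nlinarith [hxi.2.1, hc, hVd]
  -- nonnegativity and bounds for y and J
  have hy0 : ∀ t, 0 ≤ (lb t + lf t - (u t).lm) / lf t :=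
    fun t => div_nonneg (by linarith [hlm2 t]) (hlf t).1.le
  have hy1 : ∀ t, (lb t + lf t - (u t).lm) / lf t ≤ 1 := by
    intro t
    rw [div_le_one (hlf t).1]
    linarith [hlm1 t]
  have hJnn : ∀ t, 0 ≤ J t := by
    intro t
    cases t with
    | zero => rw [hJ0]
    | succ t =>
      rw [hJrec t]
      have := hy0 t
      have := le_max_right (J t - α) (0 : ℝ)
      linarith
  have hVpb : 0 ≤ V * pbmax * lfmax := mul_nonneg (mul_nonneg hV0.le hpb0) hlfmax.le
  have hJbd : ∀ t, J t ≤ V * pbmax * lfmax + 1 := by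
    intro t
    induction t with
    | zero => rw [hJ0]; linarith
    | succ t ih =>
      rw [hJrec t]
      by_cases hc : V * pbmax * lfmax < J t
      · rw [claimC t hc]
        simp only [sub_self, zero_div, add_zero]
        exact max_le (by linarith [hα.1]) (by linarith)
      · push_neg at hc
        have h1 := hy1 t
        have hm : max (J t - α) 0 ≤ J t := max_le (by linarith [hα.1]) (hJnn t)
        linarith
  -- telescoping sum bound
  have hsum : ∀ T : ℕ, ∑ t ∈ Finset.range T, (lb t + lf t - (u t).lm) / lf t
      ≤ J T + T * α := by
    intro T
    induction T with
    | zero => simp [hJ0]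
    | succ T ih =>
      rw [Finset.sum_range_succ]
      have h1 : J T - α ≤ max (J T - α) 0 := le_max_left _ _
      have h2 := hJrec T
      push_cast
      linarith
  -- the pointwise bound for the time averages
  have hfle : ∀ T : ℕ, (1 / (T : ℝ)) * ∑ t ∈ Finset.range T, (lb t + lf t - (u t).lm) / lf t
      ≤ α + (V * pbmax * lfmax + 1) * (1 / (T : ℝ)) := by
    intro T
    cases T with
    | zero => simp [hα.1]
    | succ T =>
      have hT : (0 : ℝ) < ((T + 1 : ℕ) : ℝ) := by positivity
      have h1 : ∑ t ∈ Finset.range (T + 1), (lb t + lf t - (u t).lm) / lf t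
          ≤ (V * pbmax * lfmax + 1) + ((T + 1 : ℕ) : ℝ) * α := by
        have := hsum (T + 1)
        have := hJbd (T + 1)
        linarith
      have h2 : (1 / ((T + 1 : ℕ) : ℝ)) * ∑ t ∈ Finset.range (T + 1), (lb t + lf t - (u t).lm) / lf t
          ≤ (1 / ((T + 1 : ℕ) : ℝ)) * ((V * pbmax * lfmax + 1) + ((T + 1 : ℕ) : ℝ) * α) :=
        mul_le_mul_of_nonneg_left h1 (by positivity)
      have h3 : (1 / ((T + 1 : ℕ) : ℝ)) * ((V * pbmax * lfmax + 1) + ((T + 1 : ℕ) : ℝ) * α)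
          = α + (V * pbmax * lfmax + 1) * (1 / ((T + 1 : ℕ) : ℝ)) := by
        field_simp
        ring
      calc (1 / ((T + 1 : ℕ) : ℝ)) * ∑ t ∈ Finset.range (T + 1), (lb t + lf t - (u t).lm) / lf t
          ≤ (1 / ((T + 1 : ℕ) : ℝ)) * ((V * pbmax * lfmax + 1) + ((T + 1 : ℕ) : ℝ) * α) := h2
        _ = α + (V * pbmax * lfmax + 1) * (1 / ((T + 1 : ℕ) : ℝ)) := h3
  -- conclude via limsup comparison
  have htend : Filter.Tendsto (fun T : ℕ => α + (V * pbmax * lfmax + 1) * (1 / (T : ℝ)))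
      Filter.atTop (nhds α) := by
    have h2 := tendsto_one_div_atTop_nhds_zero_nat.const_mul (V * pbmax * lfmax + 1)
    simpa using tendsto_const_nhds.add h2
  refine ⟨fun i t => hsb t i, ?_⟩
  have hcob : Filter.IsCoboundedUnder (· ≤ ·) Filter.atTop
      (fun T : ℕ => (1 / (T : ℝ)) * ∑ t ∈ Finset.range T, (lb t + lf t - (u t).lm) / lf t) := by
    apply Filter.IsBoundedUnder.isCoboundedUnder_le
    apply Filter.isBoundedUnder_of
    exact ⟨0, fun T => mul_nonneg (by positivity) (Finset.sum_nonneg fun t _ => hy0 t)⟩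
  calc Filter.limsup (fun T : ℕ => (1 / (T : ℝ)) * ∑ t ∈ Finset.range T,
        (lb t + lf t - (u t).lm) / lf t) Filter.atTop
      ≤ Filter.limsup (fun T : ℕ => α + (V * pbmax * lfmax + 1) * (1 / (T : ℝ)))
        Filter.atTop :=
        Filter.limsup_le_limsup (Filter.Eventually.of_forall hfle) hcob
          htend.isBoundedUnder_le
    _ = α := htend.limsup_eq
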